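/- Let (G, V^∞, T, k) be an instance of OddMultiwayNodeCut where G is a directed acyclic graph and T ⊆ V^∞ ⊆ V(G), and let M ⊆ V(G) \ V^∞ be an odd multiway cut. If there exists a node v ∈ r_G(M) such that M does not contain any important v→T separator, then there exists another odd multiway cut M' ⊆ V(G) \ V^∞ with |M'| ≤ |M| such that r_G(M) ∪ f_G(M) ∪ M ⊆ r_G(M') ∪ f_G(M') ∪ M' and r_G(M) ⊊ r_G(M'). -/

import Mathlib

/-- A (simple) directed path in the directed graph `G`, represented as a nonempty
list of pairwise distinct vertices in which every consecutive pair is an edge of `G`. -/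
def IsPath {V : Type*} (G : V → V → Prop) (p : List V) : Prop :=
  p ≠ [] ∧ p.Chain' G ∧ p.Nodup

/-- `p` is a directed path from `u` to `v` in `G`. -/
def IsPathFrom {V : Type*} (G : V → V → Prop) (u v : V) (p : List V) : Prop :=
  IsPath G p ∧ p.head? = some u ∧ p.getLast? = some v

/-- The length (number of edges) of a path, given as its list of vertices. -/
def pathLen {V : Type*} (p : List V) : ℕ := p.length - 1

/-- The list of directed edges traversed by a path. -/
def edgesOf {V : Type*} (p : List V) : List (V × V) := p.zip p.tail

/-- A directed graph is acyclic (a DAG) if no vertex lies on a directed cycle. -/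
def Acyclic {V : Type*} (G : V → V → Prop) : Prop :=
  ∀ v, ¬ Relation.TransGen G v v

/-- The graph obtained from `G` by deleting the vertex set `M`. -/
def delV {V : Type*} (G : V → V → Prop) (M : Set V) : V → V → Prop :=
  fun a b => G a b ∧ a ∉ M ∧ b ∉ M

/-- An odd multiway (node) cut for the instance `(G, Vinf, T)`: a set of
non-protected vertices meeting every odd `T`-path of `G`. -/
def OddMWC {V : Type*} (G : V → V → Prop) (Vinf T M : Set V) : Prop :=
  M ⊆ Vinfᶜ ∧
  ∀ u ∈ T, ∀ v ∈ T, ∀ p, IsPathFrom G u v p → Odd (pathLen p) → ∃ z ∈ p, z ∈ M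

/-- The forward shadow of `M`: vertices `v ∉ M` such that every path from a
terminal to `v` in `G` intersects `M`. -/
def fShadow {V : Type*} (G : V → V → Prop) (T M : Set V) : Set V :=
  {v | v ∉ M ∧ ∀ t ∈ T, ∀ p, IsPathFrom G t v p → ∃ z ∈ p, z ∈ M}

/-- The reverse shadow of `M`: vertices `v ∉ M` such that every path from `v`
to a terminal in `G` intersects `M`. -/
def rShadow {V : Type*} (G : V → V → Prop) (T M : Set V) : Set V :=
  {v | v ∉ M ∧ ∀ t ∈ T, ∀ p, IsPathFrom G v t p → ∃ z ∈ p, z ∈ M}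

/-- `S` is an `X → Y` separator: a set of non-protected vertices whose deletion
destroys all paths from `X` to `Y`. -/
def IsSep {V : Type*} (G : V → V → Prop) (Vinf X Y S : Set V) : Prop :=
  Disjoint S Vinf ∧ ∀ x ∈ X, ∀ y ∈ Y, ¬ ∃ p, IsPathFrom (delV G S) x y p

/-- The set of vertices reachable from `X` in `G`. -/
def Reach {V : Type*} (G : V → V → Prop) (X : Set V) : Set V :=
  {v | ∃ x ∈ X, ∃ p, IsPathFrom G x v p}

/-- The `X → Y` separator `S'` dominates the `X → Y` separator `S`. -/
def Dominates {V : Type*} (G : V → V → Prop) (Vinf X Y S' S : Set V) : Prop :=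
  IsSep G Vinf X Y S' ∧ S'.ncard ≤ S.ncard ∧
    Reach (delV G S) X ⊂ Reach (delV G S') X

/-- An important `X → Y` separator: a minimal `X → Y` separator that is not
dominated by any other `X → Y` separator. -/
def ImportantSep {V : Type*} (G : V → V → Prop) (Vinf X Y S : Set V) : Prop :=
  IsSep G Vinf X Y S ∧ (∀ S', S' ⊂ S → ¬ IsSep G Vinf X Y S') ∧
  ∀ S', IsSep G Vinf X Y S' → S' ≠ S → ¬ Dominates G Vinf X Y S' S


open Relation List

section Helpers
variable {V : Type*} {G : V → V → Prop}

theorem path_single (a : V) : IsPathFrom G a a [a] :=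
  ⟨⟨by simp, by simp [List.Chain'], by simp⟩, rfl, rfl⟩

theorem mem_head {a b : V} {p : List V} (h : IsPathFrom G a b p) : a ∈ p :=
  List.mem_of_mem_head? (by rw [h.2.1]; simp)

theorem mem_last {a b : V} {p : List V} (h : IsPathFrom G a b p) : b ∈ p :=
  List.mem_of_mem_getLast? (by rw [h.2.2]; simp)

theorem path_split {a b z : V} {p : List V} (h : IsPathFrom G a b p) (hz : z ∈ p) :
    ∃ p1 p2, IsPathFrom G a z p1 ∧ IsPathFrom G z b p2 ∧
      (∀ x ∈ p1, x ∈ p) ∧ (∀ x ∈ p2, x ∈ p) ∧ (∀ x ∈ p1, x ∈ p2 → x = z) := by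
  obtain ⟨l1, l2, rfl⟩ := List.append_of_mem hz
  obtain ⟨⟨hne, hch, hnd⟩, hhd, hlast⟩ := h
  rw [List.Chain', List.isChain_append] at hch
  obtain ⟨hc1, hc2, hlink⟩ := hch
  rw [List.nodup_append] at hnd
  obtain ⟨hn1, hn2, hdisj⟩ := hnd
  refine ⟨l1 ++ [z], z :: l2, ⟨⟨by simp, ?_, ?_⟩, ?_, by simp⟩,
    ⟨⟨by simp, hc2, hn2⟩, rfl, ?_⟩, ?_, ?_, ?_⟩
  · rw [List.Chain', List.isChain_append]
    exact ⟨hc1, List.isChain_singleton z, fun x hx y hy => by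
      simp at hy; subst hy; exact hlink x hx z rfl⟩
  · rw [List.nodup_append]
    exact ⟨hn1, List.nodup_singleton z, fun x hx => by
      simp; rintro rfl; exact hdisj _ hx _ (by simp) rfl⟩
  · cases l1 with
    | nil => simpa using hhd
    | cons x t => simpa using hhd
  · cases l2 with
    | nil => simpa using hlast
    | cons y t =>
      rw [List.getLast?_append_of_ne_nil _ (by simp)] at hlast
      exact hlast
  · intro x hx
    rcases List.mem_append.mp hx with h1 | h1
    · exact List.mem_append.mpr (Or.inl h1)
    · simp at h1; subst h1; simp
  · intro x hx; simp at hx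
    rcases hx with rfl | h1
    · simp
    · simp [h1]
  · intro x hx hx2
    rcases List.mem_append.mp hx with h1 | h1
    · exact absurd hx2 (fun h => hdisj _ h1 _ h rfl)
    · simpa using h1

theorem rtg_aux : ∀ (p : List V) (a b : V), p.Chain' G → p.head? = some a →
    p.getLast? = some b → ReflTransGen G a b := by
  intro p
  induction p with
  | nil => intro a b _ h; simp at h
  | cons x t ih =>
    intro a b hch hhd hlast
    simp at hhd; subst hhd
    cases t with
    | nil => simp at hlast; subst hlast; exact ReflTransGen.refl
    | cons y s =>
      rw [List.Chain', List.isChain_cons_cons] at hch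
      rw [List.getLast?_cons_cons] at hlast
      exact ReflTransGen.head hch.1 (ih y b hch.2 rfl hlast)

theorem rtg_of_path {a b : V} {p : List V} (h : IsPathFrom G a b p) :
    ReflTransGen G a b := rtg_aux p a b h.1.2.1 h.2.1 h.2.2

theorem mem_rtg {a b x : V} {p : List V} (h : IsPathFrom G a b p) (hx : x ∈ p) :
    ReflTransGen G a x ∧ ReflTransGen G x b := by
  obtain ⟨p1, p2, h1, h2, -, -, -⟩ := path_split h hx
  exact ⟨rtg_of_path h1, rtg_of_path h2⟩

theorem path_concat (hG : Acyclic G) {a b c : V} {p q : List V}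
    (hp : IsPathFrom G a b p) (hq : IsPathFrom G b c q) :
    ∃ r, IsPathFrom G a c r ∧ ∀ x ∈ r, x ∈ p ∨ x ∈ q := by
  obtain ⟨⟨hqne, hqch, hqnd⟩, hqhd, hqlast⟩ := hq
  cases q with
  | nil => simp at hqhd
  | cons b' q' =>
    obtain rfl : b' = b := by simpa using hqhd
    cases q' with
    | nil =>
      simp at hqlast; subst hqlast
      exact ⟨p, hp, fun x hx => Or.inl hx⟩
    | cons h t =>
      obtain ⟨⟨hpne, hpch, hpnd⟩, hphd, hplast⟩ := hp
      rw [List.Chain', List.isChain_cons_cons] at hqch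
      rw [List.getLast?_cons_cons] at hqlast
      have hdisj : ∀ x ∈ p, x ∉ (h :: t : List V) := by
        intro x hxp hxq
        have hxb : x ≠ b' := by
          rintro rfl
          exact (List.nodup_cons.mp hqnd).1 hxq
        have h1 : ReflTransGen G x b' := (mem_rtg ⟨⟨hpne, hpch, hpnd⟩, hphd, hplast⟩ hxp).2
        have h2 : ReflTransGen G b' x :=
          (mem_rtg (⟨⟨hqne, List.isChain_cons_cons.mpr hqch, hqnd⟩, rfl, by
            rw [List.getLast?_cons_cons]; exact hqlast⟩ :
            IsPathFrom G b' c (b' :: h :: t)) (List.mem_cons_of_mem _ hxq)).1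
        rcases h2.cases_head with rfl | ⟨y, hby, hyx⟩
        · exact hxb rfl
        · exact hG b' (TransGen.head' hby (hyx.trans h1))
      refine ⟨p ++ h :: t, ⟨⟨by simp [hpne], ?_, ?_⟩, ?_, ?_⟩, ?_⟩
      · rw [List.Chain', List.isChain_append]
        refine ⟨hpch, hqch.2, fun x hx y hy => ?_⟩
        rw [hplast] at hx; simp at hx hy; subst hx; subst hy; exact hqch.1
      · rw [List.nodup_append]
        exact ⟨hpnd, (List.nodup_cons.mp hqnd).2, fun x hx y hy hxy => hdisj x hx (hxy ▸ hy)⟩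
      · cases p with
        | nil => simp at hpne
        | cons u s => simpa using hphd
      · rw [List.getLast?_append_of_ne_nil _ (by simp)]; exact hqlast
      · intro x hx
        rcases List.mem_append.mp hx with h1 | h1
        · exact Or.inl h1
        · exact Or.inr (List.mem_cons_of_mem _ h1)

end Helpers

section Helpers2
variable {V : Type*} {G G' : V → V → Prop}

theorem path_mono (hle : ∀ a b, G a b → G' a b) {a b : V} {p : List V}
    (h : IsPathFrom G a b p) : IsPathFrom G' a b p :=
  ⟨⟨h.1.1, h.1.2.1.imp (fun _ _ hab => hle _ _ hab), h.1.2.2⟩, h.2⟩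

theorem delV_le {S : Set V} {a b : V} (h : delV G S a b) : G a b := h.1

theorem chain'_delV_of_avoid {S : Set V} :
    ∀ {p : List V}, p.Chain' G → (∀ x ∈ p, x ∉ S) → p.Chain' (delV G S) := by
  intro p
  induction p with
  | nil => intro _ _; simp [List.Chain']
  | cons a t ih =>
    intro hch hav
    cases t with
    | nil => simp [List.Chain']
    | cons b s =>
      rw [List.Chain', List.isChain_cons_cons] at hch ⊢
      exact ⟨⟨hch.1, hav a (by simp), hav b (by simp)⟩,
        ih hch.2 fun x hx => hav x (List.mem_cons_of_mem _ hx)⟩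

theorem path_delV_of_avoid {S : Set V} {a b : V} {p : List V}
    (h : IsPathFrom G a b p) (hav : ∀ x ∈ p, x ∉ S) : IsPathFrom (delV G S) a b p :=
  ⟨⟨h.1.1, chain'_delV_of_avoid h.1.2.1 hav, h.1.2.2⟩, h.2⟩

theorem avoid_of_chain'_delV {S : Set V} :
    ∀ {p : List V} {a : V}, p.Chain' (delV G S) → p.head? = some a → a ∉ S →
      ∀ x ∈ p, x ∉ S := by
  intro p
  induction p with
  | nil => intro a _ _ _ x hx; simp at hx
  | cons c t ih =>
    intro a hch hhd ha x hx
    obtain rfl : c = a := by simpa using hhd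
    cases t with
    | nil => simp at hx; subst hx; exact ha
    | cons b s =>
      rw [List.Chain', List.isChain_cons_cons] at hch
      rcases List.mem_cons.mp hx with rfl | hx'
      · exact ha
      · exact ih hch.2 rfl hch.1.2.2 x hx'

theorem avoid_of_path_delV {S : Set V} {a b : V} {p : List V}
    (h : IsPathFrom (delV G S) a b p) (ha : a ∉ S) : ∀ x ∈ p, x ∉ S :=
  avoid_of_chain'_delV h.1.2.1 h.2.1 ha

theorem propagate_aux {W : Set V} :
    ∀ {p : List V} {a : V}, p.Chain' G → p.head? = some a → a ∈ W →
      (∀ x y, x ∈ W → G x y → y ∈ W) → ∀ x ∈ p, x ∈ W := by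
  intro p
  induction p with
  | nil => intro a _ _ _ _ x hx; simp at hx
  | cons c t ih =>
    intro a hch hhd ha hstep x hx
    obtain rfl : c = a := by simpa using hhd
    cases t with
    | nil => simp at hx; subst hx; exact ha
    | cons b s =>
      rw [List.Chain', List.isChain_cons_cons] at hch
      rcases List.mem_cons.mp hx with rfl | hx'
      · exact ha
      · exact ih hch.2 rfl (hstep _ b ha hch.1) hstep x hx'

theorem path_propagate {W : Set V} {a b : V} {p : List V} (h : IsPathFrom G a b p)
    (ha : a ∈ W) (hstep : ∀ x y, x ∈ W → G x y → y ∈ W) : ∀ x ∈ p, x ∈ W :=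
  propagate_aux h.1.2.1 h.2.1 ha hstep

theorem acyclic_delV {S : Set V} (hG : Acyclic G) : Acyclic (delV G S) :=
  fun x h => hG x ((show TransGen (delV G S) ≤ TransGen G from
    TransGen.mono fun _ _ hab => hab.1) x x h)

theorem mem_reach_self (G' : V → V → Prop) (a : V) : a ∈ Reach G' {a} :=
  ⟨a, rfl, [a], path_single a⟩

theorem reach_iff {a z : V} : z ∈ Reach G' {a} ↔ ∃ p, IsPathFrom G' a z p := by
  constructor
  · rintro ⟨x, rfl, p, hp⟩; exact ⟨p, hp⟩
  · rintro ⟨p, hp⟩; exact ⟨a, rfl, p, hp⟩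

theorem reach_mono_graph (hle : ∀ a b, G a b → G' a b) {a : V} :
    Reach G {a} ⊆ Reach G' {a} := by
  intro z hz
  obtain ⟨p, hp⟩ := reach_iff.mp hz
  exact reach_iff.mpr ⟨p, path_mono hle hp⟩

theorem reach_delV_anti {S S' : Set V} (hss : S ⊆ S') {a : V} :
    Reach (delV G S') {a} ⊆ Reach (delV G S) {a} :=
  reach_mono_graph fun _ _ hab => ⟨hab.1, fun h => hab.2.1 (hss h), fun h => hab.2.2 (hss h)⟩

theorem mem_path_reach {a z x : V} {p : List V} (h : IsPathFrom G' a z p) (hx : x ∈ p) :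
    x ∈ Reach G' {a} := by
  obtain ⟨p1, -, h1, -, -, -, -⟩ := path_split h hx
  exact reach_iff.mpr ⟨p1, h1⟩

theorem reach_extend (hG' : Acyclic G') {a z t : V} {q : List V}
    (hz : z ∈ Reach G' {a}) (hq : IsPathFrom G' z t q) : t ∈ Reach G' {a} := by
  obtain ⟨p, hp⟩ := reach_iff.mp hz
  obtain ⟨r, hr, -⟩ := path_concat hG' hp hq
  exact reach_iff.mpr ⟨r, hr⟩

theorem reach_delV_not_mem {S : Set V} {a z : V} (hz : z ∈ Reach (delV G S) {a})
    (ha : a ∉ S) : z ∉ S := by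
  obtain ⟨p, hp⟩ := reach_iff.mp hz
  exact avoid_of_path_delV hp ha z (mem_last hp)

theorem reach_of_mem {S : Set V} {a z : V} (hz : z ∈ Reach (delV G S) {a}) (ha : a ∈ S) :
    z = a := by
  obtain ⟨p, hp⟩ := reach_iff.mp hz
  obtain ⟨⟨hne, hch, hnd⟩, hhd, hlast⟩ := hp
  cases p with
  | nil => simp at hhd
  | cons c t =>
    obtain rfl : c = a := by simpa using hhd
    cases t with
    | nil => simp at hlast; exact hlast.symm
    | cons b s =>
      rw [List.Chain', List.isChain_cons_cons] at hch
      exact absurd ha hch.1.2.1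

theorem reach_closed {S : Set V} (hG : Acyclic G) {a x w : V}
    (hx : x ∈ Reach (delV G S) {a}) (hxw : G x w) (hxS : x ∉ S) (hwS : w ∉ S) :
    w ∈ Reach (delV G S) {a} := by
  have hne : x ≠ w := by
    rintro rfl
    exact hG x (Relation.TransGen.single hxw)
  have hpath : IsPathFrom (delV G S) x w [x, w] :=
    ⟨⟨by simp, by simp [List.Chain', List.isChain_cons_cons]; exact ⟨hxw, hxS, hwS⟩, by simp [hne]⟩, rfl, rfl⟩
  exact reach_extend (acyclic_delV hG) hx hpath

end Helpers2

/-- **Lemma (pushing towards important separators).**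
Let `(G, Vinf, T, k)` be an instance of OddMultiwayNodeCut with `G` a DAG and
`T ⊆ Vinf`, and let `M ⊆ V(G) \ Vinf` be an odd multiway cut.  If there is a
vertex `v ∈ r_G(M)` such that `M` contains no important `v → T` separator, then
there is another odd multiway cut `M'` with `|M'| ≤ |M|` such that
`r_G(M) ∪ f_G(M) ∪ M ⊆ r_G(M') ∪ f_G(M') ∪ M'` and `r_G(M) ⊊ r_G(M')`. -/
theorem improve_cut_of_no_important_separator {V : Type*} [Fintype V]
    (G : V → V → Prop) (hG : Acyclic G) (Vinf T : Set V) (hT : T ⊆ Vinf) (k : ℕ)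
    (M : Set V) (hM : OddMWC G Vinf T M)
    (v : V) (hv : v ∈ rShadow G T M)
    (hno : ¬ ∃ S, S ⊆ M ∧ ImportantSep G Vinf {v} T S) :
    ∃ M' : Set V, OddMWC G Vinf T M' ∧ M'.ncard ≤ M.ncard ∧
      rShadow G T M ∪ fShadow G T M ∪ M ⊆ rShadow G T M' ∪ fShadow G T M' ∪ M' ∧
      rShadow G T M ⊂ rShadow G T M' := by
  classical
  have hvM : v ∉ M := hv.1
  have hvnotT : v ∉ T := by
    intro hvT
    obtain ⟨z, hz1, hz2⟩ := hv.2 v hvT [v] (path_single v)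
    simp at hz1
    subst hz1
    exact hvM hz2
  have hsepM : IsSep G Vinf {v} T M := by
    refine ⟨Set.disjoint_left.mpr fun a ha => hM.1 ha, ?_⟩
    intro x hx t ht hex
    obtain ⟨p, hp⟩ := hex
    rw [Set.mem_singleton_iff] at hx
    subst hx
    have hpav : ∀ y ∈ p, y ∉ M := avoid_of_path_delV hp hvM
    obtain ⟨z, hz1, hz2⟩ := hv.2 t ht p (path_mono (fun _ _ h => h.1) hp)
    exact hpav z hz1 hz2
  -- minimum-cardinality subset-of-M separator S0
  obtain ⟨S0, hS0mem, hS0min⟩ :=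
    Set.exists_min_image {S : Set V | S ⊆ M ∧ IsSep G Vinf {v} T S} Set.ncard
      (Set.toFinite _) ⟨M, subset_rfl, hsepM⟩
  obtain ⟨hS0M, hS0sep⟩ := hS0mem
  have hvS0 : v ∉ S0 := fun h => hvM (hS0M h)
  -- minimality witnesses
  have hS0wit : ∀ z ∈ S0, ∃ t ∈ T, ∃ p, IsPathFrom G v t p ∧ z ∈ p ∧
      ∀ x ∈ p, x ∈ S0 → x = z := by
    intro z hz
    have hA : Disjoint (S0 \ {z}) Vinf :=
      Set.disjoint_left.mpr fun a ha => Set.disjoint_left.mp hS0sep.1 ha.1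
    have h1 : ¬ IsSep G Vinf {v} T (S0 \ {z}) := by
      intro hsep
      have h2 : S0.ncard ≤ (S0 \ {z}).ncard :=
        hS0min _ ⟨Set.diff_subset.trans hS0M, hsep⟩
      have h3 : (S0 \ {z}).ncard < S0.ncard :=
        Set.ncard_diff_singleton_lt_of_mem hz (Set.toFinite _)
      omega
    have h2 : ¬ ∀ x ∈ ({v} : Set V), ∀ y ∈ T, ¬ ∃ p,
        IsPathFrom (delV G (S0 \ {z})) x y p := fun h => h1 ⟨hA, h⟩
    push_neg at h2
    obtain ⟨x, hx, t, ht, p, hp⟩ := h2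
    rw [Set.mem_singleton_iff] at hx
    rw [hx] at hp
    have hav : ∀ x ∈ p, x ∉ S0 \ {z} :=
      avoid_of_path_delV hp (fun h => hvS0 h.1)
    have hpG : IsPathFrom G v t p := path_mono (fun _ _ h => h.1) hp
    have hzp : z ∈ p := by
      by_contra hzp
      refine hS0sep.2 v rfl t ht ⟨p, path_delV_of_avoid hpG ?_⟩
      intro x hx hxS0
      rcases eq_or_ne x z with rfl | hne
      · exact hzp hx
      · exact hav x hx ⟨hxS0, hne⟩
    refine ⟨t, ht, p, hpG, hzp, ?_⟩
    intro x hx hxS0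
    by_contra hne
    exact hav x hx ⟨hxS0, hne⟩
  -- S0 is not important, hence dominated
  have hS0minimal : ∀ S', S' ⊂ S0 → ¬ IsSep G Vinf {v} T S' := by
    intro S' hss hsep
    have h1 : S0.ncard ≤ S'.ncard := hS0min _ ⟨hss.subset.trans hS0M, hsep⟩
    have h2 : S'.ncard < S0.ncard := Set.ncard_lt_ncard hss (Set.toFinite _)
    omega
  obtain ⟨S1, hS1sep, hS1ne, hS1dom⟩ : ∃ S', IsSep G Vinf {v} T S' ∧ S' ≠ S0 ∧
      Dominates G Vinf {v} T S' S0 := by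
    by_contra hcon
    push_neg at hcon
    exact hno ⟨S0, hS0M, hS0sep, hS0minimal, fun S' h1 h2 => hcon S' h1 h2⟩
  obtain ⟨-, hS1card, hS1reach⟩ := hS1dom
  -- choose Sx minimizing |Sx \ (M \ S0)| among separators with reach ⊋ Reach(S0)
  obtain ⟨Sx, hSxmem, hSxmin⟩ :=
    Set.exists_min_image
      {S : Set V | IsSep G Vinf {v} T S ∧
        Reach (delV G S0) {v} ⊂ Reach (delV G S) {v}}
      (fun S => (S \ (M \ S0)).ncard) (Set.toFinite _) ⟨S1, hS1sep, hS1reach⟩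
  obtain ⟨hSxsep, hSxreach⟩ := hSxmem
  have hvSx : v ∉ Sx := by
    intro h
    obtain ⟨w, hw1, hw2⟩ := Set.exists_of_ssubset hSxreach
    have hwv : w = v := reach_of_mem hw1 h
    rw [hwv] at hw2
    exact hw2 (mem_reach_self _ v)
  have hZ1Sx : ∀ z ∈ Reach (delV G Sx) {v}, z ∉ Sx :=
    fun z hz => reach_delV_not_mem hz hvSx
  have hRS0Z1 : Reach (delV G S0) {v} ⊆ Reach (delV G Sx) {v} := hSxreach.subset
  -- (A): S0 \ Sx ⊆ Z1
  have hS0Z1 : ∀ z ∈ S0, z ∉ Sx → z ∈ Reach (delV G Sx) {v} := by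
    intro z hzS0 hzSx
    obtain ⟨t, ht, p, hp, hzp, honly⟩ := hS0wit z hzS0
    obtain ⟨p1, p2, h1, h2, hp1sub, hp2sub, hint⟩ := path_split hp hzp
    have hav : ∀ x ∈ p1, x ∉ Sx := by
      intro x hx
      by_cases hxz : x = z
      · subst hxz; exact hzSx
      · obtain ⟨q1, q2, hq1, hq2, hq1sub, hq2sub, hqint⟩ := path_split h1 hx
        have havq : ∀ y ∈ q1, y ∉ S0 := by
          intro y hy hyS0
          have hyz : y = z := honly y (hp1sub y (hq1sub y hy)) hyS0
          subst hyz
          exact hxz (hqint y hy (mem_last hq2)).symm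
        have hxR : x ∈ Reach (delV G S0) {v} :=
          reach_iff.mpr ⟨q1, path_delV_of_avoid hq1 havq⟩
        exact hZ1Sx x (hRS0Z1 hxR)
    exact reach_iff.mpr ⟨p1, path_delV_of_avoid h1 hav⟩
  -- (C8): cut property of Z1
  have hcut : ∀ z ∈ Reach (delV G Sx) {v}, ∀ t ∈ T, ∀ q, IsPathFrom G z t q →
      ∃ x ∈ q, x ∈ Sx := by
    intro z hz t ht q hq
    by_contra hcon
    push_neg at hcon
    have hq' : IsPathFrom (delV G Sx) z t q := path_delV_of_avoid hq hcon
    obtain ⟨p, hp⟩ := reach_iff.mp (reach_extend (acyclic_delV hG) hz hq')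
    exact hSxsep.2 v rfl t ht ⟨p, hp⟩
  -- (B): Sx avoids the reverse shadow of M
  have hSxr : ∀ u ∈ Sx, u ∉ rShadow G T M := by
    intro u huSx hur
    have huM : u ∉ M := hur.1
    have huMSx : u ∉ M ∪ (Sx \ {u}) := by simp [huM]
    have huZ2 : u ∈ Reach (delV G (M ∪ (Sx \ {u}))) {u} := mem_reach_self _ u
    set Z : Set V := Reach (delV G Sx) {v} ∪ Reach (delV G (M ∪ (Sx \ {u}))) {u}
      with hZdef
    set S2 : Set V := {w | w ∉ Z ∧ ∃ x ∈ Z, G x w} with hS2def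
    have hZT : ∀ t ∈ T, t ∉ Z := by
      intro t ht htZ
      rcases htZ with h1 | h2
      · obtain ⟨p, hp⟩ := reach_iff.mp h1
        exact hSxsep.2 v rfl t ht ⟨p, hp⟩
      · obtain ⟨p, hp⟩ := reach_iff.mp h2
        have hav := avoid_of_path_delV hp huMSx
        obtain ⟨z, hz1, hz2⟩ := hur.2 t ht p (path_mono (fun _ _ h => h.1) hp)
        exact hav z hz1 (Or.inl hz2)
    have hS2sub : ∀ w ∈ S2, w ∈ Sx ∨ w ∈ M := by
      rintro w ⟨hwZ, x, hxZ, hxw⟩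
      rcases hxZ with h1 | h1
      · by_cases hwSx : w ∈ Sx
        · exact Or.inl hwSx
        · exact absurd (Or.inl (reach_closed hG h1 hxw (hZ1Sx x h1) hwSx)) hwZ
      · by_cases hw2 : w ∈ M ∪ (Sx \ {u})
        · rcases hw2 with h | h
          · exact Or.inr h
          · exact Or.inl h.1
        · exact absurd (Or.inr
            (reach_closed hG h1 hxw (reach_delV_not_mem h1 huMSx) hw2)) hwZ
    have hS2Z : ∀ w ∈ S2, w ∉ Z := fun w hw => hw.1
    have hS2sep : IsSep G Vinf {v} T S2 := by
      constructor
      · rw [Set.disjoint_left]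
        intro w hw hwV
        rcases hS2sub w hw with h | h
        · exact Set.disjoint_left.mp hSxsep.1 h hwV
        · exact hM.1 h hwV
      · intro x hx t ht hex
        obtain ⟨p, hp⟩ := hex
        rw [Set.mem_singleton_iff] at hx
        rw [hx] at hp
        have hvZ : v ∈ Z := Or.inl (mem_reach_self _ v)
        have hall : ∀ y ∈ p, y ∈ Z := by
          refine path_propagate hp hvZ ?_
          intro x y hxZ hxy
          by_contra hyZ
          exact hxy.2.2 ⟨hyZ, x, hxZ, hxy.1⟩
        exact hZT t ht (hall t (mem_last hp))
    have hZ1S2 : Reach (delV G Sx) {v} ⊆ Reach (delV G S2) {v} := by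
      intro z hz
      obtain ⟨p, hp⟩ := reach_iff.mp hz
      have hall : ∀ x ∈ p, x ∈ Reach (delV G Sx) {v} := fun x hx => mem_path_reach hp hx
      have hav : ∀ x ∈ p, x ∉ S2 := fun x hx h2 => h2.1 (Or.inl (hall x hx))
      exact reach_iff.mpr ⟨p, path_delV_of_avoid (path_mono (fun _ _ h => h.1) hp) hav⟩
    have hS2C : IsSep G Vinf {v} T S2 ∧
        Reach (delV G S0) {v} ⊂ Reach (delV G S2) {v} :=
      ⟨hS2sep, lt_of_lt_of_le hSxreach hZ1S2⟩
    have hmu : (S2 \ (M \ S0)) ⊆ (Sx \ (M \ S0)) \ {u} := by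
      rintro w ⟨hwS2, hwMS0⟩
      have hwSx : w ∈ Sx := by
        rcases hS2sub w hwS2 with h | h
        · exact h
        · have hwS0 : w ∈ S0 := by
            by_contra h0
            exact hwMS0 ⟨h, h0⟩
          by_contra hwSx
          exact hwS2.1 (Or.inl (hS0Z1 w hwS0 hwSx))
      refine ⟨⟨hwSx, hwMS0⟩, ?_⟩
      simp only [Set.mem_singleton_iff]
      rintro rfl
      exact hwS2.1 (Or.inr huZ2)
    have h1 : (S2 \ (M \ S0)).ncard < (Sx \ (M \ S0)).ncard := by
      have h2 : (S2 \ (M \ S0)).ncard ≤ ((Sx \ (M \ S0)) \ {u}).ncard :=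
        Set.ncard_le_ncard hmu (Set.toFinite _)
      have h3 : ((Sx \ (M \ S0)) \ {u}).ncard < (Sx \ (M \ S0)).ncard :=
        Set.ncard_diff_singleton_lt_of_mem ⟨huSx, fun h => huM h.1⟩ (Set.toFinite _)
      omega
    have := hSxmin S2 hS2C
    omega
  -- central path-killing fact
  have hkey : ∀ t2 ∈ T, ∀ z q, z ∈ S0 → z ∉ Sx → IsPathFrom G z t2 q →
      (∀ x ∈ q, x ∉ Sx) → False := by
    intro t2 ht z q h1 h2 hq hav
    obtain ⟨x, hx1, hx2⟩ := hcut z (hS0Z1 z h1 h2) t2 ht q hq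
    exact hav x hx1 hx2
  have hrr : rShadow G T M ⊆ rShadow G T ((M \ S0) ∪ Sx) := by
    intro u hu
    have huM : u ∉ M := hu.1
    have huSx : u ∉ Sx := fun h => hSxr u h hu
    refine ⟨?_, ?_⟩
    · rintro (h | h)
      · exact huM h.1
      · exact huSx h
    · intro t ht q hq
      by_contra hcon
      push_neg at hcon
      obtain ⟨z, hz1, hz2⟩ := hu.2 t ht q hq
      have hzS0 : z ∈ S0 := by
        by_contra h0
        exact hcon z hz1 (Or.inl ⟨hz2, h0⟩)
      have hzSx : z ∉ Sx := fun h => hcon z hz1 (Or.inr h)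
      obtain ⟨-, q2, -, h2, -, hq2sub, -⟩ := path_split hq hz1
      exact hkey t ht z q2 hzS0 hzSx h2
        (fun x hx hxSx => hcon x (hq2sub x hx) (Or.inr hxSx))
  -- the improved cut
  refine ⟨(M \ S0) ∪ Sx, ⟨?_, ?_⟩, ?_, ?_, ?_⟩
  · -- M' ⊆ Vinfᶜ
    rintro x (hx | hx)
    · exact hM.1 hx.1
    · exact fun h => Set.disjoint_left.mp hSxsep.1 hx h
  · -- odd multiway cut
    intro t1 ht1 t2 ht2 p hp hodd
    by_contra hcon
    push_neg at hcon
    obtain ⟨z, hz1, hz2⟩ := hM.2 t1 ht1 t2 ht2 p hp hodd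
    have hzS0 : z ∈ S0 := by
      by_contra h0
      exact hcon z hz1 (Or.inl ⟨hz2, h0⟩)
    have hzSx : z ∉ Sx := fun h => hcon z hz1 (Or.inr h)
    obtain ⟨-, p2, -, h2, -, hp2sub, -⟩ := path_split hp hz1
    exact hkey t2 ht2 z p2 hzS0 hzSx h2
      (fun x hx hxSx => hcon x (hp2sub x hx) (Or.inr hxSx))
  · -- cardinality
    have h1 : ((M \ S0) ∪ Sx).ncard ≤ (M \ S0).ncard + (Sx \ (M \ S0)).ncard := by
      rw [← Set.union_diff_self]
      exact Set.ncard_union_le _ _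
    have h2 : (Sx \ (M \ S0)).ncard ≤ S0.ncard := by
      have h3 := hSxmin S1 ⟨hS1sep, hS1reach⟩
      have h4 : (S1 \ (M \ S0)).ncard ≤ S1.ncard :=
        Set.ncard_le_ncard Set.diff_subset (Set.toFinite _)
      omega
    have h5 : (M \ S0).ncard = M.ncard - S0.ncard := Set.ncard_diff hS0M (Set.toFinite _)
    have h6 : S0.ncard ≤ M.ncard := Set.ncard_le_ncard hS0M (Set.toFinite _)
    omega
  · -- the union of shadows grows
    rintro x ((hx | hx) | hx)
    · exact Or.inl (Or.inl (hrr hx))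
    · -- forward shadow
      by_cases hxSx : x ∈ Sx
      · exact Or.inr (Or.inr hxSx)
      have hxM' : x ∉ (M \ S0) ∪ Sx := by
        rintro (h | h)
        · exact hx.1 h.1
        · exact hxSx h
      by_cases hf : ∀ t ∈ T, ∀ p, IsPathFrom G t x p → ∃ z ∈ p, z ∈ (M \ S0) ∪ Sx
      · exact Or.inl (Or.inr ⟨hxM', hf⟩)
      · push_neg at hf
        obtain ⟨t1, ht1, P, hP, hPav⟩ := hf
        obtain ⟨z, hz1, hz2⟩ := hx.2 t1 ht1 P hP
        have hzS0 : z ∈ S0 := by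
          by_contra h0
          exact hPav z hz1 (Or.inl ⟨hz2, h0⟩)
        have hzSx : z ∉ Sx := fun h => hPav z hz1 (Or.inr h)
        obtain ⟨-, P2, -, hP2, -, hP2sub, -⟩ := path_split hP hz1
        refine Or.inl (Or.inl ⟨hxM', ?_⟩)
        intro t2 ht2 q hq
        by_contra hcon
        push_neg at hcon
        obtain ⟨r, hr, hrsub⟩ := path_concat hG hP2 hq
        refine hkey t2 ht2 z r hzS0 hzSx hr ?_
        intro y hy hySx
        rcases hrsub y hy with h | h
        · exact hPav y (hP2sub y h) (Or.inr hySx)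
        · exact hcon y h (Or.inr hySx)
    · -- x ∈ M
      by_cases h1 : x ∈ Sx
      · exact Or.inr (Or.inr h1)
      by_cases h2 : x ∈ S0
      · refine Or.inl (Or.inl ⟨?_, ?_⟩)
        · rintro (h | h)
          · exact h.2 h2
          · exact h1 h
        · intro t ht q hq
          obtain ⟨y, hy1, hy2⟩ := hcut x (hS0Z1 x h2 h1) t ht q hq
          exact ⟨y, hy1, Or.inr hy2⟩
      · exact Or.inr (Or.inl ⟨hx, h2⟩)
  · -- strictness
    rw [Set.ssubset_def]
    refine ⟨hrr, fun hsup => ?_⟩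
    obtain ⟨w, hwS0, hwSx⟩ : ∃ w, w ∈ S0 ∧ w ∉ Sx := by
      by_contra h
      push_neg at h
      exact (lt_iff_le_not_ge.mp hSxreach).2 (reach_delV_anti h)
    have hw : w ∈ rShadow G T ((M \ S0) ∪ Sx) := by
      refine ⟨?_, ?_⟩
      · rintro (h | h)
        · exact h.2 hwS0
        · exact hwSx h
      · intro t ht q hq
        obtain ⟨y, hy1, hy2⟩ := hcut w (hS0Z1 w hwS0 hwSx) t ht q hq
        exact ⟨y, hy1, Or.inr hy2⟩
    exact (hsup hw).1 (hS0M hwS0)
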